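/- Let 0 ≤ d < ∞, 0 < θ < ∞, 0 < R ≤ ∞, and set r = min{1, θ}. Then for any countable family of sets E_k ⊂ X, H^{d,θ}_R(⋃_k E_k)^r ≤ ∑_k H^{d,θ}_R(E_k)^r. -/

import Mathlib

open MeasureTheory Metric
open scoped ENNReal NNReal

/-- The Netrusov--Hausdorff content of codimension `d` with parameters `θ` and `R`. -/
noncomputable def NHcontent {X : Type*} [MetricSpace X] [MeasurableSpace X]
    (μ : Measure X) (d θ : ℝ) (R : ENNReal) (E : Set X) : ENNReal :=
  ⨅ (c : ℕ → X) (rad : ℕ → ℝ) (_ : ∀ j, 0 < rad j)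
    (_ : ∀ j, ENNReal.ofReal (rad j) ≤ R) (_ : E ⊆ ⋃ j, ball (c j) (rad j)),
    (∑' i : ℤ,
      (∑' j : {j : ℕ // (2 : ℝ) ^ (-i) ≤ rad j ∧ rad j < (2 : ℝ) ^ (-i + 1)},
        μ (ball (c j) (rad j)) / ENNReal.ofReal (rad j ^ d)) ^ θ) ^ (1 / θ)


lemma auxRpowISup {p : ℝ} (hp : 0 < p) {ι : Sort*} (g : ι → ℝ≥0∞) :
    (⨆ n, g n) ^ p = ⨆ n, g n ^ p :=
  Monotone.map_iSup_of_continuousAt (ENNReal.continuous_rpow_const.continuousAt)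
    (fun _ _ h => ENNReal.rpow_le_rpow h hp.le)
    (by simpa using ENNReal.zero_rpow_of_pos hp)

lemma auxTsumISup (g : ℕ → ℤ → ℝ≥0∞) (hg : Monotone g) :
    ∑' i : ℤ, ⨆ n, g n i = ⨆ n, ∑' i : ℤ, g n i := by
  simp_rw [← MeasureTheory.lintegral_count]
  exact MeasureTheory.lintegral_iSup (fun n => Measurable.of_discrete)
    (fun n m h i => hg h i)

lemma auxMinkowski2 {p : ℝ} (hp : 1 ≤ p) (f g : ℤ → ℝ≥0∞) :
    (∑' i, (f i + g i) ^ p) ^ (1 / p) ≤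
      (∑' i, f i ^ p) ^ (1 / p) + (∑' i, g i ^ p) ^ (1 / p) := by
  simp_rw [← MeasureTheory.lintegral_count]
  exact ENNReal.lintegral_Lp_add_le Measurable.of_discrete.aemeasurable
    Measurable.of_discrete.aemeasurable hp

lemma auxMinkowskiF {p : ℝ} (hp : 1 ≤ p) (f : ℕ → ℤ → ℝ≥0∞) (s : Finset ℕ) :
    (∑' i, (∑ k ∈ s, f k i) ^ p) ^ (1 / p) ≤
      ∑ k ∈ s, (∑' i, f k i ^ p) ^ (1 / p) := by
  have hp0 : 0 < p := one_pos.trans_le hp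
  classical
  induction s using Finset.induction with
  | empty =>
      have h0 : ((0:ℝ≥0∞)) ^ p = 0 := ENNReal.zero_rpow_of_pos hp0
      simp only [Finset.sum_empty, h0, tsum_zero,
        ENNReal.zero_rpow_of_pos (one_div_pos.mpr hp0), le_refl]
  | insert _ _ hx ih =>
      rename_i a s
      simp only [Finset.sum_insert hx]
      calc (∑' i, (f a i + ∑ k ∈ s, f k i) ^ p) ^ (1 / p)
          ≤ (∑' i, f a i ^ p) ^ (1 / p) + (∑' i, (∑ k ∈ s, f k i) ^ p) ^ (1 / p) :=
            auxMinkowski2 hp _ _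
        _ ≤ _ := add_le_add_right ih _

lemma auxMinkowskiTsum {p : ℝ} (hp : 1 ≤ p) (f : ℕ → ℤ → ℝ≥0∞) :
    (∑' i, (∑' k, f k i) ^ p) ^ (1 / p) ≤ ∑' k, (∑' i, f k i ^ p) ^ (1 / p) := by
  have hp0 : 0 < p := one_pos.trans_le hp
  have hmono : Monotone fun n => fun i => (∑ k ∈ Finset.range n, f k i) ^ p := by
    intro n m h i
    exact ENNReal.rpow_le_rpow
      (Finset.sum_le_sum_of_subset (Finset.range_subset_range.2 h)) hp0.le
  calc (∑' i, (∑' k, f k i) ^ p) ^ (1 / p)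
      = (∑' i : ℤ, ⨆ n, (∑ k ∈ Finset.range n, f k i) ^ p) ^ (1 / p) := by
        congr 1
        refine tsum_congr fun i => ?_
        rw [ENNReal.tsum_eq_iSup_nat, auxRpowISup hp0]
    _ = (⨆ n, ∑' i : ℤ, (∑ k ∈ Finset.range n, f k i) ^ p) ^ (1 / p) := by
        rw [auxTsumISup _ hmono]
    _ = ⨆ n, (∑' i : ℤ, (∑ k ∈ Finset.range n, f k i) ^ p) ^ (1 / p) :=
        auxRpowISup (one_div_pos.mpr hp0) _
    _ ≤ ⨆ n, ∑ k ∈ Finset.range n, (∑' i, f k i ^ p) ^ (1 / p) :=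
        iSup_mono fun n => auxMinkowskiF hp f _
    _ ≤ ∑' k, (∑' i, f k i ^ p) ^ (1 / p) :=
        iSup_le fun n => ENNReal.sum_le_tsum _

lemma auxRpowTsumLe {p : ℝ} (hp0 : 0 < p) (hp : p ≤ 1) (x : ℕ → ℝ≥0∞) :
    (∑' k, x k) ^ p ≤ ∑' k, x k ^ p := by
  have hfin : ∀ s : Finset ℕ, (∑ k ∈ s, x k) ^ p ≤ ∑ k ∈ s, x k ^ p := by
    classical
    intro s
    induction s using Finset.induction with
    | empty => simp [ENNReal.zero_rpow_of_pos hp0]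
    | insert _ _ hx ih =>
        rename_i a s
        simp only [Finset.sum_insert hx]
        calc (x a + ∑ k ∈ s, x k) ^ p ≤ x a ^ p + (∑ k ∈ s, x k) ^ p :=
              ENNReal.rpow_add_le_add_rpow _ _ hp0.le hp
          _ ≤ _ := add_le_add_right ih _
  rw [ENNReal.tsum_eq_iSup_nat, auxRpowISup hp0]
  exact iSup_le fun n => (hfin _).trans (ENNReal.sum_le_tsum _)


lemma auxSubtypeTsum {P : ℕ → Prop} [DecidablePred P] (f : ℕ → ℝ≥0∞) :
    (∑' j : {j : ℕ // P j}, f j) = ∑' j : ℕ, if P j then f j else 0 := by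
  classical
  calc (∑' j : {j : ℕ // P j}, f j)
      = ∑' j : ({j | P j} : Set ℕ), f j := rfl
    _ = ∑' n, Set.indicator {j | P j} f n := tsum_subtype _ _
    _ = _ := tsum_congr fun n => by
          rw [Set.indicator_apply]
          simp only [Set.mem_setOf_eq]

theorem NHcontent_subadditive {X : Type*} [MetricSpace X] [MeasurableSpace X]
    (μ : Measure X)
    (d θ : ℝ) (hd : 0 ≤ d) (hθ : 0 < θ) (R : ENNReal) (hR : 0 < R)
    (E : ℕ → Set X) :
    NHcontent μ d θ R (⋃ k, E k) ^ min 1 θ ≤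
      ∑' k, NHcontent μ d θ R (E k) ^ min 1 θ := by
  classical
  set r := min 1 θ with hrdef
  have hr0 : 0 < r := lt_min one_pos hθ
  refine ENNReal.le_of_forall_pos_le_add fun ε hε hlt => ?_
  have hfin : ∀ k, NHcontent μ d θ R (E k) ≠ ⊤ := by
    intro k hk
    have h1 : NHcontent μ d θ R (E k) ^ r = ⊤ := by
      rw [hk]; exact ENNReal.top_rpow_of_pos hr0
    have h2 := ENNReal.le_tsum (f := fun k => NHcontent μ d θ R (E k) ^ r) k
    rw [h1, top_le_iff] at h2
    exact hlt.ne h2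
  obtain ⟨δ, hδ0, hδsum⟩ :=
    ENNReal.exists_pos_sum_of_countable (ε := (ε : ℝ≥0∞)) (by exact_mod_cast hε.ne') ℕ
  have key : ∀ k, ∃ (c : ℕ → X) (rad : ℕ → ℝ),
      (∀ j, 0 < rad j) ∧ (∀ j, ENNReal.ofReal (rad j) ≤ R) ∧
      (E k ⊆ ⋃ j, ball (c j) (rad j)) ∧
      ((∑' i : ℤ, (∑' j : ℕ,
          if (2 : ℝ) ^ (-i) ≤ rad j ∧ rad j < (2 : ℝ) ^ (-i + 1) then
            μ (ball (c j) (rad j)) / ENNReal.ofReal (rad j ^ d) else 0) ^ θ) ^ (1 / θ)) ^ r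
        ≤ NHcontent μ d θ R (E k) ^ r + δ k := by
    intro k
    obtain ⟨B, hBv, hb⟩ : ∃ B : ℝ≥0∞,
        B ^ r = NHcontent μ d θ R (E k) ^ r + δ k ∧ NHcontent μ d θ R (E k) < B := by
      refine ⟨(NHcontent μ d θ R (E k) ^ r + δ k) ^ (1 / r), ?_, ?_⟩
      · rw [← ENNReal.rpow_mul, one_div_mul_cancel hr0.ne', ENNReal.rpow_one]
      · have h1 : NHcontent μ d θ R (E k) ^ r < NHcontent μ d θ R (E k) ^ r + δ k :=
          ENNReal.lt_add_right (ENNReal.rpow_ne_top_of_nonneg hr0.le (hfin k))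
            (by exact_mod_cast (hδ0 k).ne')
        calc NHcontent μ d θ R (E k)
            = (NHcontent μ d θ R (E k) ^ r) ^ (1 / r) := by
              rw [← ENNReal.rpow_mul, mul_one_div_cancel hr0.ne', ENNReal.rpow_one]
          _ < _ := ENNReal.rpow_lt_rpow h1 (one_div_pos.mpr hr0)
    rw [NHcontent] at hb
    simp only [iInf_lt_iff] at hb
    obtain ⟨c, rad, h1, h2, h3, hval⟩ := hb
    refine ⟨c, rad, h1, h2, h3, ?_⟩
    have heq : (∑' i : ℤ,
        (∑' j : {j : ℕ // (2 : ℝ) ^ (-i) ≤ rad j ∧ rad j < (2 : ℝ) ^ (-i + 1)},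
          μ (ball (c j) (rad j)) / ENNReal.ofReal (rad j ^ d)) ^ θ)
        = ∑' i : ℤ, (∑' j : ℕ,
          if (2 : ℝ) ^ (-i) ≤ rad j ∧ rad j < (2 : ℝ) ^ (-i + 1) then
            μ (ball (c j) (rad j)) / ENNReal.ofReal (rad j ^ d) else 0) ^ θ :=
      tsum_congr fun i => congrArg (· ^ θ)
        (auxSubtypeTsum (P := fun j => (2 : ℝ) ^ (-i) ≤ rad j ∧ rad j < (2 : ℝ) ^ (-i + 1))
          (fun n => μ (ball (c n) (rad n)) / ENNReal.ofReal (rad n ^ d)))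
    rw [← heq]
    exact hBv ▸ ENNReal.rpow_le_rpow hval.le hr0.le
  choose c rad hpos hle hcov hval using key
  set e : ℕ ≃ ℕ × ℕ := (Denumerable.eqv (ℕ × ℕ)).symm with he
  set cc : ℕ → X := fun n => c (e n).1 (e n).2 with hcc
  set rr : ℕ → ℝ := fun n => rad (e n).1 (e n).2 with hrr
  set T : ℕ → ℤ → ℝ≥0∞ := fun k i => ∑' j : ℕ,
      if (2 : ℝ) ^ (-i) ≤ rad k j ∧ rad k j < (2 : ℝ) ^ (-i + 1) then
        μ (ball (c k j) (rad k j)) / ENNReal.ofReal (rad k j ^ d) else 0 with hT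
  have hvalT : ∀ k, ((∑' i : ℤ, T k i ^ θ) ^ (1 / θ)) ^ r
      ≤ NHcontent μ d θ R (E k) ^ r + δ k := fun k => hval k
  have hsplit : ∀ i : ℤ,
      (∑' j : {n : ℕ // (2 : ℝ) ^ (-i) ≤ rr n ∧ rr n < (2 : ℝ) ^ (-i + 1)},
        μ (ball (cc j) (rr j)) / ENNReal.ofReal (rr j ^ d)) = ∑' k, T k i := by
    intro i
    rw [auxSubtypeTsum (P := fun n => (2 : ℝ) ^ (-i) ≤ rr n ∧ rr n < (2 : ℝ) ^ (-i + 1))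
      (fun n => μ (ball (cc n) (rr n)) / ENNReal.ofReal (rr n ^ d))]
    rw [← Equiv.tsum_eq e.symm]
    rw [ENNReal.tsum_prod']
    refine tsum_congr fun k => tsum_congr fun j => ?_
    simp only [hT, hcc, hrr, Equiv.apply_symm_apply]
  have hcov' : (⋃ k, E k) ⊆ ⋃ n, ball (cc n) (rr n) := by
    intro x hx
    obtain ⟨k, hk⟩ := Set.mem_iUnion.1 hx
    obtain ⟨j, hj⟩ := Set.mem_iUnion.1 (hcov k hk)
    refine Set.mem_iUnion.2 ⟨e.symm (k, j), ?_⟩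
    simp only [hcc, hrr, Equiv.apply_symm_apply]
    exact hj
  have hcomb : NHcontent μ d θ R (⋃ k, E k)
      ≤ (∑' i : ℤ, (∑' k, T k i) ^ θ) ^ (1 / θ) := by
    calc NHcontent μ d θ R (⋃ k, E k)
        ≤ (∑' i : ℤ,
            (∑' j : {n : ℕ // (2 : ℝ) ^ (-i) ≤ rr n ∧ rr n < (2 : ℝ) ^ (-i + 1)},
              μ (ball (cc j) (rr j)) / ENNReal.ofReal (rr j ^ d)) ^ θ) ^ (1 / θ) := by
          rw [NHcontent]
          exact (iInf_le _ cc).trans ((iInf_le _ rr).trans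
            ((iInf_le _ (fun n => hpos (e n).1 (e n).2)).trans
              ((iInf_le _ (fun n => hle (e n).1 (e n).2)).trans (iInf_le _ hcov'))))
      _ = (∑' i : ℤ, (∑' k, T k i) ^ θ) ^ (1 / θ) := by
          congr 1
          exact tsum_congr fun i => by rw [hsplit i]
  rcases le_total θ 1 with h1 | h1
  · have hrθ : r = θ := min_eq_right h1
    calc NHcontent μ d θ R (⋃ k, E k) ^ r
        ≤ (((∑' i : ℤ, (∑' k, T k i) ^ θ) ^ (1 / θ))) ^ r :=
          ENNReal.rpow_le_rpow hcomb hr0.le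
      _ = ∑' i : ℤ, (∑' k, T k i) ^ θ := by
          rw [hrθ, ← ENNReal.rpow_mul, one_div_mul_cancel hθ.ne', ENNReal.rpow_one]
      _ ≤ ∑' i : ℤ, ∑' k, T k i ^ θ :=
          ENNReal.tsum_le_tsum fun i => auxRpowTsumLe hθ h1 _
      _ = ∑' k, ∑' i : ℤ, T k i ^ θ := ENNReal.tsum_comm
      _ = ∑' k, ((∑' i : ℤ, T k i ^ θ) ^ (1 / θ)) ^ r :=
          tsum_congr fun k => by
            rw [hrθ, ← ENNReal.rpow_mul, one_div_mul_cancel hθ.ne', ENNReal.rpow_one]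
      _ ≤ ∑' k, (NHcontent μ d θ R (E k) ^ r + δ k) :=
          ENNReal.tsum_le_tsum fun k => hvalT k
      _ = (∑' k, NHcontent μ d θ R (E k) ^ r) + ∑' k, (δ k : ℝ≥0∞) := ENNReal.tsum_add
      _ ≤ (∑' k, NHcontent μ d θ R (E k) ^ r) + ε := add_le_add le_rfl hδsum.le
  · have hrθ : r = 1 := min_eq_left h1
    rw [hrθ]
    simp only [ENNReal.rpow_one]
    calc NHcontent μ d θ R (⋃ k, E k)
        ≤ (∑' i : ℤ, (∑' k, T k i) ^ θ) ^ (1 / θ) := hcomb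
      _ ≤ ∑' k, (∑' i : ℤ, T k i ^ θ) ^ (1 / θ) := auxMinkowskiTsum h1 T
      _ ≤ ∑' k, (NHcontent μ d θ R (E k) + δ k) := by
          refine ENNReal.tsum_le_tsum fun k => ?_
          have := hvalT k
          rw [hrθ] at this
          simpa using this
      _ = (∑' k, NHcontent μ d θ R (E k)) + ∑' k, (δ k : ℝ≥0∞) := ENNReal.tsum_add
      _ ≤ (∑' k, NHcontent μ d θ R (E k)) + ε := add_le_add le_rfl hδsum.le
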